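/- SL₂(F₄) is isomorphic to the alternating group Alt₅; in particular SL₂(F₄) is a simple group of order 60. -/

import Mathlib

inductive F4 : Type
  | O | I | A | B
deriving DecidableEq

instance : Fintype F4 := ⟨⟨↑[F4.O, F4.I, F4.A, F4.B], by decide⟩, fun x => by cases x <;> decide⟩

namespace F4

instance : Zero F4 := ⟨O⟩
instance : One F4 := ⟨I⟩

instance : Add F4 :=
  ⟨fun x y => match x, y with
  | O, x => x | x, O => x
  | I, I => O | I, A => B | I, B => A
  | A, I => B | A, A => O | A, B => I
  | B, I => A | B, A => I | B, B => O⟩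

instance : Mul F4 :=
  ⟨fun x y => match x, y with
  | O, _ => O | _, O => O
  | I, x => x | x, I => x
  | A, A => B | A, B => I
  | B, A => I | B, B => A⟩

instance : Neg F4 := ⟨id⟩

instance : Inv F4 :=
  ⟨fun x => match x with
  | O => O | I => I | A => B | B => A⟩

instance : CommRing F4 where
  nsmul := nsmulRec
  zsmul := zsmulRec
  add_assoc := by decide
  zero_add := by decide
  add_zero := by decide
  add_comm := by decide
  neg_add_cancel := by decide
  left_distrib := by decide
  right_distrib := by decide
  zero_mul := by decide
  mul_zero := by decide
  mul_assoc := by decide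
  one_mul := by decide
  mul_one := by decide
  mul_comm := by decide

instance : Field F4 where
  mul_inv_cancel := by decide
  inv_zero := by decide
  exists_pair_ne := ⟨O, I, by decide⟩
  nnqsmul := _
  qsmul := _


/-- representatives of the five points of `P¹(F₄)` -/
def pt : Fin 5 → F4 × F4
  | 0 => (I, O) | 1 => (O, I) | 2 => (I, I) | 3 => (I, A) | 4 => (I, B)

/-- index of the projective point containing `(x, y)` -/
def idx : F4 → F4 → Fin 5
  | O, _ => 1
  | I, O => 0 | I, I => 2 | I, A => 3 | I, B => 4
  | A, O => 0 | A, A => 2 | A, B => 3 | A, I => 4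
  | B, O => 0 | B, B => 2 | B, I => 3 | B, A => 4

/-- action of the matrix `!![a, b; c, d]` on `P¹(F₄)` -/
def act (a b c d : F4) (i : Fin 5) : Fin 5 :=
  idx (a * (pt i).1 + b * (pt i).2) (c * (pt i).1 + d * (pt i).2)

theorem act_left_inv : ∀ a b c d : F4, a * d - b * c = 1 →
    ∀ i, act d b c a (act a b c d i) = i := by decide

set_option maxHeartbeats 4000000 in
theorem act_mul : ∀ a b c d a' b' c' d' : F4, a * d - b * c = 1 →
    a' * d' - b' * c' = 1 → ∀ i,
    act (a * a' + b * c') (a * b' + b * d') (c * a' + d * c') (c * b' + d * d') i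
      = act a b c d (act a' b' c' d' i) := by decide

theorem act_inj : ∀ a b c d : F4, a * d - b * c = 1 →
    (∀ i, act a b c d i = i) → a = 1 ∧ b = 0 ∧ c = 0 ∧ d = 1 := by decide

end F4

namespace F4

set_option maxRecDepth 40000 in
set_option maxHeartbeats 4000000 in
theorem sign_of_act : ∀ a b c d : F4, a * d - b * c = 1 →
    ∀ σ : Equiv.Perm (Fin 5), (∀ i, σ i = act a b c d i) →
    Equiv.Perm.sign σ = 1 := by decide

theorem act_id : ∀ i, act 1 0 0 1 i = i := by decide

theorem det_entries (g : Matrix.SpecialLinearGroup (Fin 2) F4) :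
    g.1 0 0 * g.1 1 1 - g.1 0 1 * g.1 1 0 = 1 := by
  have h := g.2
  rwa [Matrix.det_fin_two] at h

/-- the permutation of `P¹(F₄)` induced by an element of `SL₂(F₄)` -/
def permSL (g : Matrix.SpecialLinearGroup (Fin 2) F4) : Equiv.Perm (Fin 5) where
  toFun := act (g.1 0 0) (g.1 0 1) (g.1 1 0) (g.1 1 1)
  invFun := act (g.1 1 1) (g.1 0 1) (g.1 1 0) (g.1 0 0)
  left_inv := act_left_inv _ _ _ _ (det_entries g)
  right_inv := act_left_inv _ _ _ _ (by rw [mul_comm]; exact det_entries g)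

theorem permSL_mul (g h : Matrix.SpecialLinearGroup (Fin 2) F4) :
    permSL (g * h) = permSL g * permSL h := by
  apply Equiv.ext
  intro i
  show act ((g * h).1 0 0) ((g * h).1 0 1) ((g * h).1 1 0) ((g * h).1 1 1) i
      = permSL g (permSL h i)
  have e : ∀ a b : Fin 2, (g * h).1 a b = g.1 a 0 * h.1 0 b + g.1 a 1 * h.1 1 b := by
    intro a b
    show (g.1 * h.1) a b = _
    rw [Matrix.mul_apply, Fin.sum_univ_two]
  rw [e, e, e, e]
  exact act_mul _ _ _ _ _ _ _ _ (det_entries g) (det_entries h) i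

/-- the action homomorphism `SL₂(F₄) →* Perm (Fin 5)` -/
def phi : Matrix.SpecialLinearGroup (Fin 2) F4 →* Equiv.Perm (Fin 5) where
  toFun := permSL
  map_one' := by
    apply Equiv.ext
    intro i
    show act ((1 : Matrix (Fin 2) (Fin 2) F4) 0 0) ((1 : Matrix (Fin 2) (Fin 2) F4) 0 1)
        ((1 : Matrix (Fin 2) (Fin 2) F4) 1 0) ((1 : Matrix (Fin 2) (Fin 2) F4) 1 1) i = i
    rw [Matrix.one_apply_eq, Matrix.one_apply_eq, Matrix.one_apply_ne (by decide),
      Matrix.one_apply_ne (by decide)]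
    exact act_id i
  map_mul' := permSL_mul

theorem phi_inj : Function.Injective phi := by
  rw [injective_iff_map_eq_one]
  intro g hg
  have hg' : permSL g = 1 := hg
  have h5 : ∀ i, act (g.1 0 0) (g.1 0 1) (g.1 1 0) (g.1 1 1) i = i :=
    fun i => Equiv.ext_iff.mp hg' i
  obtain ⟨h1, h2, h3, h4⟩ := act_inj _ _ _ _ (det_entries g) h5
  apply Subtype.ext
  ext i j
  fin_cases i <;> fin_cases j <;>
    simp [h1, h2, h3, h4, Matrix.one_apply]

set_option maxHeartbeats 4000000 in
theorem card_SL2_F4 : Fintype.card (Matrix.SpecialLinearGroup (Fin 2) F4) = 60 := by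
  decide

end F4

namespace F4

theorem sign_phi (g : Matrix.SpecialLinearGroup (Fin 2) F4) :
    Equiv.Perm.sign (phi g) = 1 :=
  sign_of_act _ _ _ _ (det_entries g) (phi g) (fun _ => rfl)

/-- the homomorphism into the alternating group -/
def psi : Matrix.SpecialLinearGroup (Fin 2) F4 →* alternatingGroup (Fin 5) :=
  phi.codRestrict (alternatingGroup (Fin 5))
    (fun g => Equiv.Perm.mem_alternatingGroup.mpr (sign_phi g))

theorem psi_bij : Function.Bijective psi := by
  rw [Fintype.bijective_iff_injective_and_card]
  constructor
  · intro g h hgh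
    exact phi_inj (congrArg Subtype.val hgh)
  · rw [card_SL2_F4]
    have h2 := two_mul_card_alternatingGroup (α := Fin 5)
    have h120 : Nat.factorial 5 = 120 := rfl
    rw [Fintype.card_perm, Fintype.card_fin, h120] at h2
    omega

/-- `SL₂(F₄) ≃* Alt₅` -/
noncomputable def mulEquivA5 :
    Matrix.SpecialLinearGroup (Fin 2) F4 ≃* alternatingGroup (Fin 5) :=
  MulEquiv.ofBijective psi psi_bij

end F4

/-- transfer `SL₂` along a ring isomorphism -/
def SLcongr {R S : Type*} [CommRing R] [CommRing S] (e : R ≃+* S) :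
    Matrix.SpecialLinearGroup (Fin 2) R ≃* Matrix.SpecialLinearGroup (Fin 2) S :=
  { Matrix.SpecialLinearGroup.map (e : R →+* S) with
    invFun := Matrix.SpecialLinearGroup.map (e.symm : S →+* R)
    left_inv := fun g => by
      apply Subtype.ext
      ext i j
      simp [Matrix.SpecialLinearGroup.map_apply_coe]
    right_inv := fun g => by
      apply Subtype.ext
      ext i j
      simp [Matrix.SpecialLinearGroup.map_apply_coe] }

theorem SL2_F4_iso_alternatingGroup_five' :
    Nonempty (Matrix.SpecialLinearGroup (Fin 2) (GaloisField 2 2) ≃*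
      alternatingGroup (Fin 5)) ∧
    IsSimpleGroup (Matrix.SpecialLinearGroup (Fin 2) (GaloisField 2 2)) ∧
    Nat.card (Matrix.SpecialLinearGroup (Fin 2) (GaloisField 2 2)) = 60 := by
  haveI : Fintype (GaloisField 2 2) := Fintype.ofFinite _
  have hcard : Fintype.card F4 = Fintype.card (GaloisField 2 2) := by
    have h := GaloisField.card 2 2 (by norm_num)
    rw [Nat.card_eq_fintype_card] at h
    rw [h]
    decide
  let e : F4 ≃+* GaloisField 2 2 := FiniteField.ringEquivOfCardEq hcard
  let Ψ : Matrix.SpecialLinearGroup (Fin 2) (GaloisField 2 2) ≃*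
      alternatingGroup (Fin 5) := (SLcongr e).symm.trans F4.mulEquivA5
  have hnc : Nat.card (Matrix.SpecialLinearGroup (Fin 2) (GaloisField 2 2)) = 60 := by
    rw [Nat.card_congr (SLcongr e).toEquiv.symm, Nat.card_eq_fintype_card,
      F4.card_SL2_F4]
  refine ⟨⟨Ψ⟩, ?_, hnc⟩
  haveI : Nontrivial (Matrix.SpecialLinearGroup (Fin 2) (GaloisField 2 2)) := by
    rw [← Finite.one_lt_card_iff_nontrivial, hnc]
    norm_num
  exact IsSimpleGroup.isSimpleGroup_of_surjective Ψ.symm.toMonoidHom Ψ.symm.surjective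

/-- `SL₂(𝔽₄)` is isomorphic to the alternating group `Alt₅`; in particular
it is a simple group of order 60. -/
theorem SL2_F4_iso_alternatingGroup_five :
    Nonempty (Matrix.SpecialLinearGroup (Fin 2) (GaloisField 2 2) ≃*
      alternatingGroup (Fin 5)) ∧
    IsSimpleGroup (Matrix.SpecialLinearGroup (Fin 2) (GaloisField 2 2)) ∧
    Nat.card (Matrix.SpecialLinearGroup (Fin 2) (GaloisField 2 2)) = 60 := by
  exact SL2_F4_iso_alternatingGroup_five'
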